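/- Let G be a group, x ∈ G with ⟨x⟩ 2-subnormal in G, and suppose the commutator subgroup H of the normal closure ⟨x^G⟩ centralizes x. Then H ≤ C_G(x^g) for every g ∈ G, and hence H is contained in the center of ⟨x^G⟩. -/
import Mathlib


/-- If ⟨x⟩ is 2-subnormal in G (normal in its normal closure) and the
commutator subgroup H of ⟨x^G⟩ centralizes x, then H ≤ C_G(x^g) for all g ∈ G, and
hence H is contained in the center of ⟨x^G⟩. -/
theorem stmt_2 {G : Type*} [Group G] (x : G)
    (hsub : ((Subgroup.zpowers x).subgroupOf (Subgroup.normalClosure {x})).Normal)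
    (hcent : ⁅Subgroup.normalClosure {x}, Subgroup.normalClosure {x}⁆ ≤
      Subgroup.centralizer {x}) :
    (∀ g : G, ⁅Subgroup.normalClosure {x}, Subgroup.normalClosure {x}⁆ ≤
        Subgroup.centralizer {g⁻¹ * x * g}) ∧
    (∀ h ∈ ⁅Subgroup.normalClosure {x}, Subgroup.normalClosure {x}⁆,
      ∀ a ∈ Subgroup.normalClosure {x}, h * a = a * h) := by
  set N := Subgroup.normalClosure ({x} : Set G) with hN
  set H := ⁅N, N⁆ with hH
  have hHnorm : H.Normal := Subgroup.commutator_normal N N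
  have main : ∀ g : G, H ≤ Subgroup.centralizer {g⁻¹ * x * g} := by
    intro g h hh
    rw [Subgroup.mem_centralizer_iff]
    rintro y rfl
    have h1 : g * h * g⁻¹ ∈ H := hHnorm.conj_mem h hh g
    have h2 := hcent h1 x rfl
    -- h2 : x * (g * h * g⁻¹) = (g * h * g⁻¹) * x
    have : g⁻¹ * (x * (g * h * g⁻¹)) * g = g⁻¹ * ((g * h * g⁻¹) * x) * g := by
      rw [h2]
    group at this ⊢
    rw [this]
  refine ⟨main, fun h hh a ha => ?_⟩
  have key : N ≤ Subgroup.centralizer {h} := by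
    rw [hN]
    rw [show Subgroup.normalClosure ({x} : Set G) = Subgroup.closure (Group.conjugatesOfSet {x}) from rfl, Subgroup.closure_le]
    intro y hy
    rw [Group.mem_conjugatesOfSet_iff] at hy
    obtain ⟨b, hb, hconj⟩ := hy
    rcases Set.mem_singleton_iff.mp hb with rfl
    obtain ⟨c, hc⟩ := hconj
    show y ∈ Subgroup.centralizer {h}
    have h4 : y = (c : G)⁻¹⁻¹ * b * (c : G)⁻¹ := by
      rw [inv_inv]
      exact (mul_inv_eq_iff_eq_mul.mpr hc.eq).symm
    rw [Subgroup.mem_centralizer_iff]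
    rintro z rfl
    have h3 := main (c : G)⁻¹ hh (((c : G)⁻¹)⁻¹ * b * (c : G)⁻¹) rfl
    rw [h4]
    exact h3.symm
  exact key ha h rfl
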